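/- Let I be a nonempty index set, S a measurable space, and for each finite nonempty J ⊆ I let M_J ⊆ L^∞(S^J) be a linear subspace containing 1 with M_K ∘ pr_{JK} ⊆ M_J for K ⊆ J. Let (E_J) be a consistent family of pre-expectations, i.e. E_K(f) = E_J(f ∘ pr_{JK}) for f ∈ M_K, K ⊆ J. Then there exists an expectation Ê on L^∞(S^I, B^I) with Ê(f ∘ pr_J) = E_J(f) for all finite J and f ∈ M_J; and Ê may be chosen convex (resp. sublinear) if all E_J are convex (resp. sublinear). -/

import Mathlib

open Filter

/-- Projection `pr_{JK} : S^J → S^K` for `K ⊆ J`. -/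
def projJK {I S : Type*} {J K : Finset I} (h : K ⊆ J) (x : ↥J → S) (k : ↥K) : S :=
  x ⟨k.1, h k.2⟩

/-- Projection `pr_J : S^I → S^J`. -/
def projJ {I S : Type*} (J : Finset I) (x : I → S) (j : ↥J) : S := x j.1

def IsLinftyF {Ω : Type*} [MeasurableSpace Ω] (X : Ω → ℝ) : Prop :=
  Measurable X ∧ ∃ C : ℝ, ∀ ω, |X ω| ≤ C

/-- The set of values `E J f` over dominators `f ∈ M J` of `X`. -/
def DSet {I S : Type*} (M : ∀ J : Finset I, Set ((↥J → S) → ℝ))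
    (E : ∀ J : Finset I, ((↥J → S) → ℝ) → ℝ) (X : (I → S) → ℝ) : Set ℝ :=
  {r | ∃ J : Finset I, J.Nonempty ∧ ∃ f, f ∈ M J ∧ (∀ x, X x ≤ f (projJ J x)) ∧ E J f = r}

theorem stmt15 {I S : Type*} [Nonempty I] [MeasurableSpace S]
    (M : ∀ J : Finset I, Set ((↥J → S) → ℝ))
    -- each `M_J` is a linear subspace of `L^∞(S^J)` containing `1`
    (hL : ∀ J : Finset I, ∀ f ∈ M J, IsLinftyF f)
    (hconst : ∀ (J : Finset I) (c : ℝ), (fun _ : ↥J → S => c) ∈ M J)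
    (hadd : ∀ J : Finset I, ∀ f ∈ M J, ∀ g ∈ M J, (fun x => f x + g x) ∈ M J)
    (hsmul : ∀ (J : Finset I) (c : ℝ), ∀ f ∈ M J, (fun x => c * f x) ∈ M J)
    -- compatibility `M_K ∘ pr_{JK} ⊆ M_J`
    (hcomp : ∀ (J K : Finset I) (h : K ⊆ J), ∀ f ∈ M K, f ∘ projJK (S := S) h ∈ M J)
    -- a consistent family of pre-expectations
    (E : ∀ J : Finset I, ((↥J → S) → ℝ) → ℝ)
    (hmono : ∀ J : Finset I, J.Nonempty → ∀ f ∈ M J, ∀ g ∈ M J,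
      (∀ x, f x ≤ g x) → E J f ≤ E J g)
    (hcp : ∀ J : Finset I, J.Nonempty → ∀ c : ℝ, E J (fun _ : ↥J → S => c) = c)
    (hcons : ∀ (J K : Finset I) (h : K ⊆ J), J.Nonempty → K.Nonempty →
      ∀ f ∈ M K, E K f = E J (f ∘ projJK (S := S) h)) :
    ∃ Ehat : ((I → S) → ℝ) → ℝ,
      -- `Ê` is an expectation on `L^∞(S^I, B^I)` ...
      (∀ X Y : (I → S) → ℝ, IsLinftyF X → IsLinftyF Y → (∀ x, X x ≤ Y x) →
        Ehat X ≤ Ehat Y) ∧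
      (∀ c : ℝ, Ehat (fun _ : I → S => c) = c) ∧
      -- ... extending the family `(E_J)`
      (∀ J : Finset I, J.Nonempty → ∀ f ∈ M J, Ehat (f ∘ projJ J) = E J f) ∧
      -- convexity is preserved
      ((∀ J : Finset I, J.Nonempty → ∀ f ∈ M J, ∀ g ∈ M J, ∀ t ∈ Set.Icc (0:ℝ) 1,
          E J (fun x => t * f x + (1 - t) * g x) ≤ t * E J f + (1 - t) * E J g) →
        ∀ X Y : (I → S) → ℝ, IsLinftyF X → IsLinftyF Y → ∀ t ∈ Set.Icc (0:ℝ) 1,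
          Ehat (fun x => t * X x + (1 - t) * Y x) ≤ t * Ehat X + (1 - t) * Ehat Y) ∧
      -- sublinearity is preserved
      ((∀ J : Finset I, J.Nonempty →
          (∀ f ∈ M J, ∀ g ∈ M J, E J (fun x => f x + g x) ≤ E J f + E J g) ∧
          (∀ c : ℝ, 0 ≤ c → ∀ f ∈ M J, E J (fun x => c * f x) = c * E J f)) →
        (∀ X Y : (I → S) → ℝ, IsLinftyF X → IsLinftyF Y →
          Ehat (fun x => X x + Y x) ≤ Ehat X + Ehat Y) ∧
        (∀ c : ℝ, 0 ≤ c → ∀ X : (I → S) → ℝ, IsLinftyF X →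
          Ehat (fun x => c * X x) = c * Ehat X)) := by
  classical
  obtain ⟨i0⟩ := (inferInstance : Nonempty I)
  have hJ0 : ({i0} : Finset I).Nonempty := ⟨i0, Finset.mem_singleton_self i0⟩
  by_cases hS : Nonempty S
  swap
  · -- `S` is empty: the hypotheses are contradictory
    exfalso
    have h01 : (fun _ : ↥({i0} : Finset I) → S => (0:ℝ)) = (fun _ => (1:ℝ)) := by
      funext x
      exact absurd ⟨x ⟨i0, Finset.mem_singleton_self i0⟩⟩ hS
    have h := hcp {i0} hJ0 0
    rw [h01, hcp {i0} hJ0 1] at h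
    norm_num at h
  obtain ⟨s0⟩ := hS
  -- the projections are surjective
  have hsurj : ∀ (J : Finset I) (y : ↥J → S), ∃ x : I → S, projJ J x = y := by
    intro J y
    refine ⟨fun i => if h : i ∈ J then y ⟨i, h⟩ else s0, ?_⟩
    funext j
    simp [projJ, j.2]
  -- basic facts about the sets of dominating values
  have hub : ∀ (X : (I → S) → ℝ) (C : ℝ), (∀ x, X x ≤ C) → C ∈ DSet M E X := by
    intro X C hC
    exact ⟨{i0}, hJ0, fun _ => C, hconst _ C, fun x => hC x, hcp _ hJ0 C⟩
  have hne : ∀ X : (I → S) → ℝ, IsLinftyF X → (DSet M E X).Nonempty := by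
    rintro X ⟨-, C, hC⟩
    exact ⟨C, hub X C fun x => (abs_le.mp (hC x)).2⟩
  have hlow : ∀ (X : (I → S) → ℝ) (b : ℝ), (∀ x, b ≤ X x) → ∀ r ∈ DSet M E X, b ≤ r := by
    rintro X b hb r ⟨K, hK, g, hgM, hdom, hE⟩
    have hgb : ∀ y : ↥K → S, b ≤ g y := by
      intro y
      obtain ⟨x, hx⟩ := hsurj K y
      calc b ≤ X x := hb x
        _ ≤ g (projJ K x) := hdom x
        _ = g y := by rw [hx]
    calc b = E K (fun _ => b) := (hcp K hK b).symm
      _ ≤ E K g := hmono K hK _ (hconst K b) g hgM hgb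
      _ = r := hE
  have hbd : ∀ (X : (I → S) → ℝ) (b : ℝ), (∀ x, b ≤ X x) → BddBelow (DSet M E X) := by
    intro X b hb
    exact ⟨b, fun r hr => hlow X b hb r hr⟩
  have hbdL : ∀ X : (I → S) → ℝ, IsLinftyF X → BddBelow (DSet M E X) := by
    rintro X ⟨-, C, hC⟩
    exact hbd X (-C) fun x => (abs_le.mp (hC x)).1
  -- comparison of expectations through a common index set
  have hcompare : ∀ (J : Finset I), J.Nonempty → ∀ f ∈ M J, ∀ (K : Finset I), K.Nonempty →
      ∀ g ∈ M K, (∀ x : I → S, f (projJ J x) ≤ g (projJ K x)) → E J f ≤ E K g := by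
    intro J hJ f hf K hK g hg hle
    obtain ⟨j, hj⟩ := hJ
    have hJL : J ⊆ J ∪ K := Finset.subset_union_left
    have hKL : K ⊆ J ∪ K := Finset.subset_union_right
    have hLne : (J ∪ K).Nonempty := ⟨j, Finset.mem_union_left _ hj⟩
    rw [hcons (J ∪ K) J hJL hLne ⟨j, hj⟩ f hf, hcons (J ∪ K) K hKL hLne hK g hg]
    refine hmono (J ∪ K) hLne _ (hcomp _ _ hJL f hf) _ (hcomp _ _ hKL g hg) ?_
    intro y
    obtain ⟨x, hx⟩ := hsurj (J ∪ K) y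
    have h1 : projJK (S := S) hJL y = projJ J x := by rw [← hx]; rfl
    have h2 : projJK (S := S) hKL y = projJ K x := by rw [← hx]; rfl
    show f (projJK (S := S) hJL y) ≤ g (projJK (S := S) hKL y)
    rw [h1, h2]
    exact hle x
  -- the constant-function value
  have hconstE : ∀ c : ℝ, sInf (DSet M E (fun _ : I → S => c)) = c := by
    intro c
    refine le_antisymm (csInf_le (hbd _ c fun _ => le_rfl) (hub _ c fun _ => le_rfl)) ?_
    exact le_csInf ⟨c, hub _ c fun _ => le_rfl⟩ (hlow _ c fun _ => le_rfl)
  -- key combination bound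
  have hpair : ∀ (Z X Y : (I → S) → ℝ) (s u : ℝ), 0 ≤ s → 0 ≤ u →
      (∀ L : Finset I, L.Nonempty → ∀ f ∈ M L, ∀ g ∈ M L,
        E L (fun y => s * f y + u * g y) ≤ s * E L f + u * E L g) →
      (∀ x, Z x ≤ s * X x + u * Y x) → BddBelow (DSet M E Z) →
      ∀ a ∈ DSet M E X, ∀ b ∈ DSet M E Y, sInf (DSet M E Z) ≤ s * a + u * b := by
    rintro Z X Y s u hs hu hE hZ hbdZ a ⟨J, hJ, f, hf, hdf, hEf⟩ b ⟨K, hK, g, hg, hdg, hEg⟩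
    obtain ⟨j, hj⟩ := hJ
    have hJL : J ⊆ J ∪ K := Finset.subset_union_left
    have hKL : K ⊆ J ∪ K := Finset.subset_union_right
    have hLne : (J ∪ K).Nonempty := ⟨j, Finset.mem_union_left _ hj⟩
    set f' : (↥(J ∪ K) → S) → ℝ := f ∘ projJK (S := S) hJL with hf'def
    set g' : (↥(J ∪ K) → S) → ℝ := g ∘ projJK (S := S) hKL with hg'def
    have hf' : f' ∈ M (J ∪ K) := hcomp _ _ hJL f hf
    have hg' : g' ∈ M (J ∪ K) := hcomp _ _ hKL g hg
    have hsf : (fun y => s * f' y) ∈ M (J ∪ K) := hsmul _ s f' hf'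
    have hug : (fun y => u * g' y) ∈ M (J ∪ K) := hsmul _ u g' hg'
    have hh : (fun y => s * f' y + u * g' y) ∈ M (J ∪ K) := hadd _ _ hsf _ hug
    have hmem : E (J ∪ K) (fun y => s * f' y + u * g' y) ∈ DSet M E Z := by
      refine ⟨J ∪ K, hLne, _, hh, ?_, rfl⟩
      intro x
      have h1 : f' (projJ (J ∪ K) x) = f (projJ J x) := rfl
      have h2 : g' (projJ (J ∪ K) x) = g (projJ K x) := rfl
      calc Z x ≤ s * X x + u * Y x := hZ x
        _ ≤ s * f (projJ J x) + u * g (projJ K x) :=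
            add_le_add (mul_le_mul_of_nonneg_left (hdf x) hs)
              (mul_le_mul_of_nonneg_left (hdg x) hu)
        _ = s * f' (projJ (J ∪ K) x) + u * g' (projJ (J ∪ K) x) := by rw [h1, h2]
    have hEf' : E (J ∪ K) f' = a := by
      rw [← hEf, hf'def]; exact (hcons (J ∪ K) J hJL hLne ⟨j, hj⟩ f hf).symm
    have hEg' : E (J ∪ K) g' = b := by
      rw [← hEg, hg'def]; exact (hcons (J ∪ K) K hKL hLne hK g hg).symm
    calc sInf (DSet M E Z) ≤ E (J ∪ K) (fun y => s * f' y + u * g' y) := csInf_le hbdZ hmem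
      _ ≤ s * E (J ∪ K) f' + u * E (J ∪ K) g' := hE _ hLne f' hf' g' hg'
      _ = s * a + u * b := by rw [hEf', hEg']
  -- conclude from the pairwise bound
  have hconc : ∀ (Z X Y : (I → S) → ℝ) (s u : ℝ), 0 ≤ s → 0 ≤ u →
      (DSet M E X).Nonempty → (DSet M E Y).Nonempty →
      (∀ a ∈ DSet M E X, ∀ b ∈ DSet M E Y, sInf (DSet M E Z) ≤ s * a + u * b) →
      sInf (DSet M E Z) ≤ s * sInf (DSet M E X) + u * sInf (DSet M E Y) := by
    intro Z X Y s u hs hu hneX hneY hkey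
    by_contra hcon
    push_neg at hcon
    set δ : ℝ := sInf (DSet M E Z) - (s * sInf (DSet M E X) + u * sInf (DSet M E Y)) with hδ
    have hδpos : 0 < δ := by simp only [hδ]; linarith
    set ε : ℝ := δ / (s + u + 1) with hε
    have hden : (0:ℝ) < s + u + 1 := by linarith
    have hεpos : 0 < ε := div_pos hδpos hden
    obtain ⟨a, ha, halt⟩ := exists_lt_of_csInf_lt hneX (lt_add_of_pos_right _ hεpos)
    obtain ⟨b, hb, hblt⟩ := exists_lt_of_csInf_lt hneY (lt_add_of_pos_right _ hεpos)
    have h1 : s * a ≤ s * (sInf (DSet M E X) + ε) := mul_le_mul_of_nonneg_left halt.le hs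
    have h2 : u * b ≤ u * (sInf (DSet M E Y) + ε) := mul_le_mul_of_nonneg_left hblt.le hu
    have h7 : (s + u + 1) * ε = δ := by rw [hε]; field_simp
    have h6 : s * ε + u * ε < δ := by nlinarith
    have h4 : s * (sInf (DSet M E X) + ε) = s * sInf (DSet M E X) + s * ε := by ring
    have h5 : u * (sInf (DSet M E Y) + ε) = u * sInf (DSet M E Y) + u * ε := by ring
    have := hkey a ha b hb
    linarith
  refine ⟨fun X => sInf (DSet M E X), ?_, hconstE, ?_, ?_, ?_⟩
  · -- monotonicity
    intro X Y hX hY hXY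
    refine csInf_le_csInf (hbdL X hX) (hne Y hY) ?_
    rintro r ⟨K, hK, g, hg, hdom, hE⟩
    exact ⟨K, hK, g, hg, fun x => (hXY x).trans (hdom x), hE⟩
  · -- extension
    intro J hJ f hf
    have hmem : E J f ∈ DSet M E (f ∘ projJ J) := ⟨J, hJ, f, hf, fun x => le_rfl, rfl⟩
    have hlb : ∀ r ∈ DSet M E (f ∘ projJ J), E J f ≤ r := by
      rintro r ⟨K, hK, g, hg, hdom, hE⟩
      rw [← hE]
      exact hcompare J hJ f hf K hK g hg hdom
    exact le_antisymm (csInf_le ⟨E J f, hlb⟩ hmem) (le_csInf ⟨E J f, hmem⟩ hlb)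
  · -- convexity
    rintro hconv X Y hX hY t ⟨ht0, ht1⟩
    obtain ⟨-, CX, hCX⟩ := hX
    obtain ⟨-, CY, hCY⟩ := hY
    have hbdZ : BddBelow (DSet M E (fun x => t * X x + (1 - t) * Y x)) := by
      refine hbd _ (-(t * CX + (1 - t) * CY)) ?_
      intro x
      have h1 := abs_le.mp (hCX x)
      have h2 := abs_le.mp (hCY x)
      nlinarith [mul_nonneg ht0 (by linarith [h1.1] : (0:ℝ) ≤ X x + CX),
        mul_nonneg (by linarith : (0:ℝ) ≤ 1 - t) (by linarith [h2.1] : (0:ℝ) ≤ Y x + CY)]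
    refine hconc _ X Y t (1 - t) ht0 (by linarith)
      ⟨CX, hub X CX fun x => (abs_le.mp (hCX x)).2⟩
      ⟨CY, hub Y CY fun x => (abs_le.mp (hCY x)).2⟩ ?_
    exact hpair _ X Y t (1 - t) ht0 (by linarith)
      (fun L hL f hf g hg => hconv L hL f hf g hg t ⟨ht0, ht1⟩) (fun x => le_rfl) hbdZ
  · -- sublinearity
    intro hsub
    constructor
    · rintro X Y hX hY
      obtain ⟨-, CX, hCX⟩ := hX
      obtain ⟨-, CY, hCY⟩ := hY
      have hbdZ : BddBelow (DSet M E (fun x => X x + Y x)) := by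
        refine hbd _ (-(CX + CY)) fun x => ?_
        have h1 := abs_le.mp (hCX x)
        have h2 := abs_le.mp (hCY x)
        linarith
      have hres := hconc (fun x => X x + Y x) X Y 1 1 zero_le_one zero_le_one
        ⟨CX, hub X CX fun x => (abs_le.mp (hCX x)).2⟩
        ⟨CY, hub Y CY fun x => (abs_le.mp (hCY x)).2⟩
        (hpair _ X Y 1 1 zero_le_one zero_le_one
          (fun L hL f hf g hg => by
            have := (hsub L hL).1 f hf g hg
            simpa using this)
          (fun x => by simp) hbdZ)
      simpa using hres
    · rintro c hc X hX
      obtain ⟨-, CX, hCX⟩ := hX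
      rcases eq_or_lt_of_le hc with hc0 | hcpos
      · -- c = 0
        subst hc0
        simp only [zero_mul]
        exact hconstE 0
      · -- c > 0
        have hcne : c ≠ 0 := ne_of_gt hcpos
        have hneX : (DSet M E X).Nonempty := ⟨CX, hub X CX fun x => (abs_le.mp (hCX x)).2⟩
        have hbdcX : BddBelow (DSet M E (fun x => c * X x)) := by
          refine hbd _ (c * (-CX)) fun x => ?_
          exact mul_le_mul_of_nonneg_left (abs_le.mp (hCX x)).1 hc
        have hnecX : (DSet M E (fun x => c * X x)).Nonempty :=
          ⟨c * CX, hub _ (c * CX) fun x =>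
            mul_le_mul_of_nonneg_left (abs_le.mp (hCX x)).2 hc⟩
        refine le_antisymm ?_ ?_
        · -- sInf D(cX) ≤ c * sInf D X
          have hstep : ∀ a ∈ DSet M E X, sInf (DSet M E (fun x => c * X x)) ≤ c * a := by
            rintro a ⟨J, hJ, f, hf, hdom, hE⟩
            have hmem : c * a ∈ DSet M E (fun x => c * X x) := by
              refine ⟨J, hJ, fun y => c * f y, hsmul J c f hf, ?_, ?_⟩
              · exact fun x => mul_le_mul_of_nonneg_left (hdom x) hc
              · rw [(hsub J hJ).2 c hc f hf, hE]
            exact csInf_le hbdcX hmem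
          have hdiv : sInf (DSet M E (fun x => c * X x)) / c ≤ sInf (DSet M E X) := by
            refine le_csInf hneX fun a ha => ?_
            rw [div_le_iff₀ hcpos, mul_comm]
            exact hstep a ha
          calc sInf (DSet M E (fun x => c * X x))
              = c * (sInf (DSet M E (fun x => c * X x)) / c) := by field_simp
            _ ≤ c * sInf (DSet M E X) := mul_le_mul_of_nonneg_left hdiv hc
        · -- c * sInf D X ≤ sInf D(cX)
          refine le_csInf hnecX ?_
          rintro b ⟨K, hK, g, hg, hdom, hE⟩
          have hinv : (0:ℝ) ≤ 1 / c := by positivity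
          have hmem : (1 / c) * b ∈ DSet M E X := by
            refine ⟨K, hK, fun y => (1 / c) * g y, hsmul K (1 / c) g hg, ?_, ?_⟩
            · intro x
              have hd := hdom x
              rw [← mul_le_mul_iff_of_pos_left hcpos]
              calc c * X x ≤ g (projJ K x) := hd
                _ = c * ((1 / c) * g (projJ K x)) := by field_simp
            · rw [(hsub K hK).2 (1 / c) hinv g hg, hE]
          have h2 : sInf (DSet M E X) ≤ (1 / c) * b :=
            csInf_le (hbd X (-CX) fun x => (abs_le.mp (hCX x)).1) hmem
          calc c * sInf (DSet M E X) ≤ c * ((1 / c) * b) :=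
              mul_le_mul_of_nonneg_left h2 hc
            _ = b := by field_simp
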